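/- Let G be a weighted graph on N vertices with combinatorial Laplacian L, E_F a contracted matching of G with associated averaging projection Π_F, and let x ∈ ℝ^N be a unit eigenvector of L with eigenvalue λ. If λ ≤ (d_i + d_j + 2 W(i,j))/4 for every edge {i,j} ∈ E_F, then xᵀ Π_F L Π_F x ≥ λ. -/
import Mathlib


open Matrix

/-- The combinatorial Laplacian `L = D - W`. -/
def lap {N : ℕ} (W : Matrix (Fin N) (Fin N) ℝ) : Matrix (Fin N) (Fin N) ℝ :=
  Matrix.diagonal (fun i => ∑ j, W i j) - W

/-- `W` is the weight matrix of a weighted graph: symmetric, nonnegative, zero diagonal. -/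
def IsWeightedGraph {N : ℕ} (W : Matrix (Fin N) (Fin N) ℝ) : Prop :=
  (∀ i j, W i j = W j i) ∧ (∀ i j, 0 ≤ W i j) ∧ (∀ i, W i i = 0)

/-- A contracted matching of the weighted graph given by `W`: a finite set of edges
(each recorded once, as an ordered pair `(i,j)` with `W i j > 0` and `i ≠ j`) such that for any
two distinct edges `{i,j}`, `{p,q}` all of `W i p`, `W i q`, `W j p`, `W j q` vanish
(in particular the edges are vertex-disjoint, and no vertex of one edge is adjacent to a vertex
of another one). -/
def IsContractedMatching {N : ℕ} (W : Matrix (Fin N) (Fin N) ℝ)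
    (EF : Finset (Fin N × Fin N)) : Prop :=
  (∀ e ∈ EF, e.1 ≠ e.2 ∧ 0 < W e.1 e.2) ∧
  (∀ e ∈ EF, ∀ e' ∈ EF, e ≠ e' →
    W e.1 e'.1 = 0 ∧ W e.1 e'.2 = 0 ∧ W e.2 e'.1 = 0 ∧ W e.2 e'.2 = 0)

open scoped Classical in
/-- The averaging projection `Π_F` associated with a (vertex-disjoint) set of edges `E_F`:
`(Π_F x)(i) = (Π_F x)(j) = (x(i)+x(j))/2` for every `{i,j} ∈ E_F`, and `(Π_F x)(ℓ) = x(ℓ)` for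
every vertex `ℓ` not incident to an edge of `E_F`. -/
noncomputable def avgProj {N : ℕ} (EF : Finset (Fin N × Fin N)) :
    Matrix (Fin N) (Fin N) ℝ :=
  Matrix.of fun a b =>
    if a = b then (if ∃ e ∈ EF, a = e.1 ∨ a = e.2 then (1 : ℝ) / 2 else 1)
    else if (a, b) ∈ EF ∨ (b, a) ∈ EF then 1 / 2 else 0

section Aux

variable {N : ℕ} {W : Matrix (Fin N) (Fin N) ℝ} {EF : Finset (Fin N × Fin N)}

lemma edge_unique (hW : IsWeightedGraph W) (hEF : IsContractedMatching W EF)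
    {e e' : Fin N × Fin N} (he : e ∈ EF) (he' : e' ∈ EF) {a : Fin N}
    (ha : a = e.1 ∨ a = e.2) (ha' : a = e'.1 ∨ a = e'.2) : e = e' := by
  by_contra h
  obtain ⟨h1, h2, h3, h4⟩ := hEF.2 e he e' he' h
  have hpos := (hEF.1 e he).2
  have hsym := hW.1
  rcases ha with rfl | rfl <;> rcases ha' with h' | h'
  · rw [← h', hsym e.2 e.1] at h3; linarith
  · rw [← h', hsym e.2 e.1] at h4; linarith
  · rw [← h'] at h1; linarith
  · rw [← h'] at h2; linarith

lemma avgProj_mulVec_unmatched (x : Fin N → ℝ) {a : Fin N}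
    (h : ¬ ∃ e ∈ EF, a = e.1 ∨ a = e.2) : (avgProj EF *ᵥ x) a = x a := by
  classical
  have hent : ∀ b, avgProj EF a b = if b = a then 1 else 0 := by
    intro b
    by_cases hb : a = b
    · subst hb
      simp only [avgProj, Matrix.of_apply, if_true]
      rw [if_neg h]
    · have hb' : ¬ b = a := fun h' => hb h'.symm
      have hno : ¬ ((a, b) ∈ EF ∨ (b, a) ∈ EF) := by
        rintro (hm | hm)
        · exact h ⟨(a, b), hm, Or.inl rfl⟩
        · exact h ⟨(b, a), hm, Or.inr rfl⟩
      simp [avgProj, hb, hb', hno]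
  simp [Matrix.mulVec, dotProduct, hent, ite_mul]

lemma avgProj_mulVec_matched (hW : IsWeightedGraph W) (hEF : IsContractedMatching W EF)
    (x : Fin N → ℝ) {e : Fin N × Fin N} (he : e ∈ EF) {a : Fin N}
    (ha : a = e.1 ∨ a = e.2) : (avgProj EF *ᵥ x) a = (x e.1 + x e.2) / 2 := by
  classical
  have hne : e.1 ≠ e.2 := (hEF.1 e he).1
  -- the partner of `a`
  set p : Fin N := if a = e.1 then e.2 else e.1 with hp
  have hap : a ≠ p := by
    rcases ha with h1 | h1
    · rw [hp, if_pos h1, h1]; exact hne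
    · rw [hp, if_neg (by rw [h1]; exact hne.symm), h1]; exact hne.symm
  have hor : (a, p) ∈ EF ∨ (p, a) ∈ EF := by
    rcases ha with h1 | h1
    · left
      have hpe : p = e.2 := by rw [hp, if_pos h1]
      rw [h1, hpe, Prod.mk.eta]; exact he
    · right
      have hpe : p = e.1 := by rw [hp, if_neg (by rw [h1]; exact hne.symm)]
      rw [h1, hpe, Prod.mk.eta]; exact he
  have hex : ∃ e ∈ EF, a = e.1 ∨ a = e.2 := ⟨e, he, ha⟩
  have hent : ∀ b, avgProj EF a b =
      (if b = a then (1 : ℝ) / 2 else 0) + (if b = p then 1 / 2 else 0) := by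
    intro b
    by_cases hb : a = b
    · subst hb
      have hap' : ¬ a = p := hap
      simp only [avgProj, Matrix.of_apply, if_true]
      rw [if_pos hex, if_neg hap', add_zero]
    · have hb' : ¬ b = a := fun h' => hb h'.symm
      by_cases hbp : b = p
      · subst hbp
        simp [avgProj, hb, hb', hor]
      · have hno : ¬ ((a, b) ∈ EF ∨ (b, a) ∈ EF) := by
          rintro (hm | hm)
          · have heq : (a, b) = e := edge_unique hW hEF hm he (Or.inl rfl) ha
            have ha1 : a = e.1 := by rw [← heq]
            have hb2 : b = e.2 := by rw [← heq]
            exact hbp (by rw [hb2, hp, if_pos ha1])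
          · have heq : (b, a) = e := edge_unique hW hEF hm he (Or.inr rfl) ha
            have ha2 : a = e.2 := by rw [← heq]
            have hb1 : b = e.1 := by rw [← heq]
            have hane : a ≠ e.1 := by rw [ha2]; exact hne.symm
            exact hbp (by rw [hb1, hp, if_neg hane])
        simp [avgProj, hb, hb', hbp, hno]
  have hsum : (avgProj EF *ᵥ x) a = 1 / 2 * x a + 1 / 2 * x p := by
    simp [Matrix.mulVec, dotProduct, hent, add_mul, ite_mul,
      Finset.sum_add_distrib, Finset.sum_ite_eq']
  rw [hsum]
  rcases ha with h1 | h1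
  · rw [hp, if_pos h1, h1]; ring
  · have hane : a ≠ e.1 := by rw [h1]; exact hne.symm
    rw [hp, if_neg hane, h1]; ring

/-- Summing a function supported on matched vertices, edge by edge. -/
lemma sum_matched (hW : IsWeightedGraph W) (hEF : IsContractedMatching W EF)
    (f : Fin N → ℝ) (hf : ∀ a, (¬ ∃ e ∈ EF, a = e.1 ∨ a = e.2) → f a = 0) :
    ∑ a, f a = ∑ e ∈ EF, (f e.1 + f e.2) := by
  classical
  set M : Finset (Fin N) := EF.biUnion (fun e => ({e.1, e.2} : Finset (Fin N))) with hM
  have hmem : ∀ a : Fin N, a ∈ M ↔ ∃ e ∈ EF, a = e.1 ∨ a = e.2 := by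
    intro a
    simp [hM, Finset.mem_biUnion, Finset.mem_insert, Finset.mem_singleton]
  have h1 : ∑ a, f a = ∑ a ∈ M, f a := by
    refine (Finset.sum_subset (Finset.subset_univ M) ?_).symm
    intro a _ haM
    exact hf a (fun hmatched => haM ((hmem a).2 hmatched))
  have hdisj : (↑EF : Set (Fin N × Fin N)).PairwiseDisjoint
      (fun e => ({e.1, e.2} : Finset (Fin N))) := by
    intro e he e' he' hne
    simp only [Function.onFun]
    rw [Finset.disjoint_left]
    intro a hae hae'
    simp only [Finset.mem_insert, Finset.mem_singleton] at hae hae'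
    exact hne (edge_unique hW hEF he he' hae hae')
  rw [h1, hM, Finset.sum_biUnion hdisj]
  refine Finset.sum_congr rfl (fun e he => ?_)
  exact Finset.sum_pair (hEF.1 e he).1

/-- Rows of `W` at a matched vertex only interact with its own edge. -/
lemma mulVec_W_matched (hEF : IsContractedMatching W EF)
    {e : Fin N × Fin N} (he : e ∈ EF) {a : Fin N} (ha : a = e.1 ∨ a = e.2)
    (z : Fin N → ℝ) (hz : ∀ b, (¬ ∃ e ∈ EF, b = e.1 ∨ b = e.2) → z b = 0) :
    (W *ᵥ z) a = W a e.1 * z e.1 + W a e.2 * z e.2 := by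
  classical
  have hne : e.1 ≠ e.2 := (hEF.1 e he).1
  have : (W *ᵥ z) a = ∑ b ∈ ({e.1, e.2} : Finset (Fin N)), W a b * z b := by
    simp only [Matrix.mulVec, dotProduct]
    refine (Finset.sum_subset (Finset.subset_univ _) ?_).symm
    intro b _ hb
    simp only [Finset.mem_insert, Finset.mem_singleton] at hb
    push_neg at hb
    by_cases hbm : ∃ e' ∈ EF, b = e'.1 ∨ b = e'.2
    · obtain ⟨e', he', hb'⟩ := hbm
      have hnee : e ≠ e' := by
        rintro rfl
        rcases hb' with h | h
        · exact hb.1 h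
        · exact hb.2 h
      obtain ⟨h1, h2, h3, h4⟩ := hEF.2 e he e' he' hnee
      rcases ha with rfl | rfl <;> rcases hb' with rfl | rfl
      · rw [h1, zero_mul]
      · rw [h2, zero_mul]
      · rw [h3, zero_mul]
      · rw [h4, zero_mul]
    · rw [hz b hbm, mul_zero]
  rw [this, Finset.sum_pair hne]

end Aux




/-- for a contracted matching `E_F` with averaging projection `Π_F`, and a unit
eigenvector `x` of `L` with eigenvalue `λ`, if `λ ≤ (d_i + d_j + 2 W(i,j))/4` for every edge
`{i,j} ∈ E_F` then `xᵀ Π_F L Π_F x ≥ λ`. -/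
theorem avgProj_laplacian_quadform_ge {N : ℕ} (W : Matrix (Fin N) (Fin N) ℝ)
    (hW : IsWeightedGraph W) (EF : Finset (Fin N × Fin N))
    (hEF : IsContractedMatching W EF) (x : Fin N → ℝ) (lam : ℝ)
    (heig : lap W *ᵥ x = lam • x) (hunit : x ⬝ᵥ x = 1)
    (hlam : ∀ e ∈ EF, lam ≤ ((∑ ℓ, W e.1 ℓ) + (∑ ℓ, W e.2 ℓ) + 2 * W e.1 e.2) / 4) :
    lam ≤ (avgProj EF *ᵥ x) ⬝ᵥ (lap W *ᵥ (avgProj EF *ᵥ x)) := by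
  classical
  set y : Fin N → ℝ := avgProj EF *ᵥ x with hy
  set z : Fin N → ℝ := fun a => x a - y a with hzdef
  have hz0 : ∀ a, (¬ ∃ e ∈ EF, a = e.1 ∨ a = e.2) → z a = 0 := by
    intro a ha
    simp only [hzdef, hy]
    rw [avgProj_mulVec_unmatched x ha, sub_self]
  have hz1 : ∀ e ∈ EF, z e.1 = (x e.1 - x e.2) / 2 := by
    intro e he
    simp only [hzdef, hy]
    rw [avgProj_mulVec_matched hW hEF x he (Or.inl rfl)]
    ring
  have hz2 : ∀ e ∈ EF, z e.2 = -((x e.1 - x e.2) / 2) := by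
    intro e he
    simp only [hzdef, hy]
    rw [avgProj_mulVec_matched hW hEF x he (Or.inr rfl)]
    ring
  set S : ℝ := ∑ e ∈ EF, ((x e.1 - x e.2) / 2) ^ 2 with hS
  have hxz : x ⬝ᵥ z = 2 * S := by
    have h0 : ∀ a, (¬ ∃ e ∈ EF, a = e.1 ∨ a = e.2) → x a * z a = 0 := by
      intro a ha; rw [hz0 a ha, mul_zero]
    rw [show x ⬝ᵥ z = ∑ a, x a * z a from rfl, sum_matched hW hEF _ h0, hS,
      Finset.mul_sum]
    refine Finset.sum_congr rfl fun e he => ?_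
    rw [hz1 e he, hz2 e he]; ring
  have hLz1 : ∀ e ∈ EF, (lap W *ᵥ z) e.1 =
      (∑ ℓ, W e.1 ℓ) * z e.1 - (W e.1 e.1 * z e.1 + W e.1 e.2 * z e.2) := by
    intro e he
    rw [lap, Matrix.sub_mulVec, Pi.sub_apply, Matrix.mulVec_diagonal,
      mulVec_W_matched hEF he (Or.inl rfl) z hz0]
  have hLz2 : ∀ e ∈ EF, (lap W *ᵥ z) e.2 =
      (∑ ℓ, W e.2 ℓ) * z e.2 - (W e.2 e.1 * z e.1 + W e.2 e.2 * z e.2) := by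
    intro e he
    rw [lap, Matrix.sub_mulVec, Pi.sub_apply, Matrix.mulVec_diagonal,
      mulVec_W_matched hEF he (Or.inr rfl) z hz0]
  have hzLz : z ⬝ᵥ (lap W *ᵥ z) = ∑ e ∈ EF,
      ((∑ ℓ, W e.1 ℓ) + (∑ ℓ, W e.2 ℓ) + 2 * W e.1 e.2) *
        ((x e.1 - x e.2) / 2) ^ 2 := by
    have h0 : ∀ a, (¬ ∃ e ∈ EF, a = e.1 ∨ a = e.2) → z a * (lap W *ᵥ z) a = 0 := by
      intro a ha; rw [hz0 a ha, zero_mul]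
    rw [show z ⬝ᵥ (lap W *ᵥ z) = ∑ a, z a * (lap W *ᵥ z) a from rfl,
      sum_matched hW hEF _ h0]
    refine Finset.sum_congr rfl fun e he => ?_
    rw [hLz1 e he, hLz2 e he, hz1 e he, hz2 e he, hW.2.2 e.1, hW.2.2 e.2,
      hW.1 e.2 e.1]
    ring
  have hLsym : (lap W)ᵀ = lap W := by
    rw [lap, Matrix.transpose_sub, Matrix.diagonal_transpose]
    congr 1
    ext i j
    exact hW.1 j i
  have hxLz : x ⬝ᵥ (lap W *ᵥ z) = lam * (x ⬝ᵥ z) := by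
    rw [Matrix.dotProduct_mulVec, ← Matrix.mulVec_transpose, hLsym, heig,
      smul_dotProduct, smul_eq_mul]
  have hzLx : z ⬝ᵥ (lap W *ᵥ x) = lam * (x ⬝ᵥ z) := by
    rw [heig, dotProduct_smul, smul_eq_mul, dotProduct_comm]
  have hxLx : x ⬝ᵥ (lap W *ᵥ x) = lam := by
    rw [heig, dotProduct_smul, smul_eq_mul, hunit, mul_one]
  have hyxz : y = x - z := by
    funext a; simp [hzdef]
  have hexp : y ⬝ᵥ (lap W *ᵥ y) = lam - 2 * (lam * (x ⬝ᵥ z)) + z ⬝ᵥ (lap W *ᵥ z) := by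
    rw [hyxz, Matrix.mulVec_sub, sub_dotProduct, dotProduct_sub,
      dotProduct_sub, hxLx, hxLz, hzLx]
    ring
  have hbound : ∑ e ∈ EF, (4 * lam) * ((x e.1 - x e.2) / 2) ^ 2 ≤ ∑ e ∈ EF,
      ((∑ ℓ, W e.1 ℓ) + (∑ ℓ, W e.2 ℓ) + 2 * W e.1 e.2) *
        ((x e.1 - x e.2) / 2) ^ 2 := by
    refine Finset.sum_le_sum fun e he => ?_
    exact mul_le_mul_of_nonneg_right (by linarith [hlam e he]) (sq_nonneg _)
  have h4S : ∑ e ∈ EF, (4 * lam) * ((x e.1 - x e.2) / 2) ^ 2 = 4 * lam * S := by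
    rw [hS, Finset.mul_sum]
  rw [hexp, hxz, hzLz]
  rw [h4S] at hbound
  linarith
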